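/- Let G be a finite group and A a finite set of size q ≥ 2, and let H be a subgroup of G. Then α_{[H]}(G;A) = 1 (i.e. the set of configurations whose stabilizer is conjugate to H consists of a single G-orbit) if and only if H has index 2 in G and q = 2. -/
import Mathlib


variable {G A : Type*}

/-- The right shift action of `G` on configurations `A^G`: `(x · g) h = x (h * g⁻¹)`. -/
def shift [Group G] (x : G → A) (g : G) : G → A := fun h => x (h * g⁻¹)

/-- A transformation of the configuration space is `G`-equivariant if it commutes
with the shift action. -/
def equivariant [Group G] (τ : (G → A) → (G → A)) : Prop :=
  ∀ (x : G → A) (g : G), τ (shift x g) = shift (τ x) g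

/-- The `G`-orbit of a configuration. -/
def orbit [Group G] (x : G → A) : Set (G → A) := Set.range (shift x)

/-- The stabilizer of a configuration, as a subgroup of `G`. -/
def stab [Group G] (x : G → A) : Subgroup G where
  carrier := {g : G | shift x g = x}
  one_mem' := by
    show shift x 1 = x
    funext h
    simp [shift]
  mul_mem' := by
    intro a b ha hb
    have ha' : shift x a = x := ha
    have hb' : shift x b = x := hb
    show shift x (a * b) = x
    funext h
    show x (h * (a * b)⁻¹) = x h
    have key : h * (a * b)⁻¹ = h * b⁻¹ * a⁻¹ := by group
    rw [key]
    have h1 := congrFun ha' (h * b⁻¹)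
    have h2 := congrFun hb' h
    simp only [shift] at h1 h2
    rw [h1, h2]
  inv_mem' := by
    intro a ha
    have ha' : shift x a = x := ha
    show shift x a⁻¹ = x
    funext h
    show x (h * a⁻¹⁻¹) = x h
    rw [inv_inv]
    have h1 := congrFun ha' (h * a)
    simp only [shift] at h1
    rw [mul_inv_cancel_right] at h1
    exact h1.symm

/-- Two subgroups `H`, `K` of `G` are conjugate, namely `K = g⁻¹ * H * g` for some `g ∈ G`. -/
def conjSub [Group G] (H K : Subgroup G) : Prop :=
  ∃ g : G, ∀ a : G, a ∈ K ↔ g * a * g⁻¹ ∈ H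

section Aux

variable [Group G]

lemma mem_stab_iff (x : G → A) (g : G) : g ∈ stab x ↔ shift x g = x := Iff.rfl

lemma shift_one' (x : G → A) : shift x 1 = x := by
  funext h; simp [shift]

lemma shift_shift' (x : G → A) (g k : G) : shift (shift x g) k = shift x (g * k) := by
  funext h; simp [shift, mul_inv_rev, mul_assoc]

lemma mem_orbit_self' (x : G → A) : x ∈ orbit x := ⟨1, shift_one' x⟩

lemma orbit_shift' (x : G → A) (g : G) : orbit (shift x g) = orbit x := by
  ext y
  constructor
  · rintro ⟨k, rfl⟩
    exact ⟨g * k, (shift_shift' x g k).symm⟩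
  · rintro ⟨m, rfl⟩
    exact ⟨g⁻¹ * m, by rw [shift_shift', mul_inv_cancel_left]⟩

lemma stab_ite' (H : Subgroup G) [DecidablePred (· ∈ H)] {u v : A} (huv : u ≠ v) :
    stab (fun h => if h ∈ H then u else v) = H := by
  ext g
  rw [mem_stab_iff]
  constructor
  · intro hg
    have h1 := congrFun hg g
    simp only [shift, mul_inv_cancel] at h1
    rw [if_pos H.one_mem] at h1
    by_contra hgH
    rw [if_neg hgH] at h1
    exact huv h1
  · intro hgH
    funext h
    simp only [shift]
    have key : h * g⁻¹ ∈ H ↔ h ∈ H := H.mul_mem_cancel_right (H.inv_mem hgH)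
    exact if_congr key rfl rfl

lemma conjSub_self' (K : Subgroup G) : conjSub K K :=
  ⟨1, fun c => by simp⟩

end Aux

/-- `α_{[H]}(G;A) = 1` (the configurations whose stabilizer is
conjugate to `H` form a single `G`-orbit) iff `H` has index `2` in `G` and `|A| = 2`. -/
theorem alpha_eq_one_iff [Group G] [Fintype G] [Fintype A]
    (hq : 2 ≤ Fintype.card A) (H : Subgroup G) :
    Nat.card {O : Set (G → A) // ∃ x : G → A, O = orbit x ∧ conjSub (stab x) H} = 1 ↔
      H.index = 2 ∧ Fintype.card A = 2 := by
  classical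
  obtain ⟨a, b, hab⟩ := Fintype.exists_pair_of_one_lt_card (by omega : 1 < Fintype.card A)
  set x₁ : G → A := fun h => if h ∈ H then a else b with hx₁def
  have hstab₁ : stab x₁ = H := stab_ite' H hab
  have hconj₁ : conjSub (stab x₁) H := by rw [hstab₁]; exact conjSub_self' H
  rw [Nat.card_eq_one_iff_unique]
  constructor
  · rintro ⟨hsub, -⟩
    have huniq : ∀ x : G → A, conjSub (stab x) H → orbit x = orbit x₁ := by
      intro x hx
      have h := hsub.elim (⟨orbit x, x, rfl, hx⟩ :
          {O : Set (G → A) // ∃ x : G → A, O = orbit x ∧ conjSub (stab x) H})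
        ⟨orbit x₁, x₁, rfl, hconj₁⟩
      exact congrArg Subtype.val h
    -- First: index = 2, using the swapped indicator.
    set x₂ : G → A := fun h => if h ∈ H then b else a with hx₂def
    have hstab₂ : stab x₂ = H := stab_ite' H hab.symm
    have horb : orbit x₂ = orbit x₁ :=
      huniq x₂ (by rw [hstab₂]; exact conjSub_self' H)
    have hx2mem : x₂ ∈ orbit x₁ := horb ▸ mem_orbit_self' x₂
    obtain ⟨k, hk⟩ := hx2mem
    have hidx : H.index = 2 := by
      rw [Subgroup.index_eq_two_iff]
      refine ⟨k⁻¹, fun h => ?_⟩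
      have hpt := congrFun hk h
      simp only [shift, hx₁def, hx₂def] at hpt
      by_cases hh : h ∈ H
      · rw [if_pos hh] at hpt
        refine Or.inr ⟨hh, fun hc => ?_⟩
        rw [if_pos hc] at hpt
        exact hab hpt
      · rw [if_neg hh] at hpt
        refine Or.inl ⟨?_, hh⟩
        by_contra hc
        rw [if_neg hc] at hpt
        exact hab hpt.symm
    refine ⟨hidx, ?_⟩
    -- Second: |A| = 2.
    by_contra hA
    have hA3 : 3 ≤ Fintype.card A := by
      rcases Nat.lt_or_ge (Fintype.card A) 3 with h | h
      · interval_cases h' : Fintype.card A <;> omega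
      · exact h
    obtain ⟨c, hca, hcb⟩ : ∃ c : A, c ≠ a ∧ c ≠ b := by
      by_contra hc
      push_neg at hc
      have hsub' : (Finset.univ : Finset A) ⊆ {a, b} := by
        intro d _
        simp only [Finset.mem_insert, Finset.mem_singleton]
        rcases eq_or_ne d a with h | h
        · exact Or.inl h
        · exact Or.inr (hc d h)
      have h1 := Finset.card_le_card hsub'
      have h2 : ({a, b} : Finset A).card ≤ 2 :=
        (Finset.card_insert_le a {b}).trans (by simp)
      rw [Finset.card_univ] at h1
      omega
    obtain ⟨t, ht⟩ : ∃ t : G, t ∉ H := by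
      by_contra h
      push_neg at h
      have : H = ⊤ := (Subgroup.eq_top_iff' H).mpr h
      rw [this, Subgroup.index_top] at hidx
      omega
    set x₃ : G → A := fun h => if h ∈ H then a else c with hx₃def
    have hstab₃ : stab x₃ = H := stab_ite' H (Ne.symm hca)
    have horb₃ : orbit x₃ = orbit x₁ :=
      huniq x₃ (by rw [hstab₃]; exact conjSub_self' H)
    have hx3mem : x₃ ∈ orbit x₁ := horb₃ ▸ mem_orbit_self' x₃
    obtain ⟨m, hm⟩ := hx3mem
    have hpt := congrFun hm t
    simp only [shift, hx₁def, hx₃def, if_neg ht] at hpt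
    by_cases hc' : t * m⁻¹ ∈ H
    · rw [if_pos hc'] at hpt
      exact hca hpt.symm
    · rw [if_neg hc'] at hpt
      exact hcb hpt.symm
  · rintro ⟨hidx, hA⟩
    -- every element of A is a or b
    have hall : ∀ d : A, d = a ∨ d = b := by
      intro d
      have heq : ({a, b} : Finset A) = Finset.univ := by
        apply Finset.eq_of_subset_of_card_le (Finset.subset_univ _)
        rw [Finset.card_univ, hA, Finset.card_pair hab]
      have : d ∈ ({a, b} : Finset A) := by rw [heq]; exact Finset.mem_univ d
      simpa using this
    obtain ⟨t0, ht0⟩ := Subgroup.index_eq_two_iff.mp hidx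
    have hR : ∀ g h : G, g ∉ H → h ∉ H → g * h⁻¹ ∈ H := by
      intro g h hg hh
      have hgt : g * t0 ∈ H := by
        rcases ht0 g with ⟨h1, _⟩ | ⟨h1, _⟩
        · exact h1
        · exact absurd h1 hg
      have hht : h * t0 ∈ H := by
        rcases ht0 h with ⟨h1, _⟩ | ⟨h1, _⟩
        · exact h1
        · exact absurd h1 hh
      have hmem := H.mul_mem hgt (H.inv_mem hht)
      have e : g * t0 * (h * t0)⁻¹ = g * h⁻¹ := by group
      rwa [e] at hmem
    have hnorm : ∀ c g : G, c ∈ H → g * c * g⁻¹ ∈ H := by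
      intro c g hc
      by_cases hg : g ∈ H
      · exact H.mul_mem (H.mul_mem hg hc) (H.inv_mem hg)
      · have hgc : g * c ∉ H := by
          intro hcon
          have hmem := H.mul_mem hcon (H.inv_mem hc)
          rw [mul_assoc, mul_inv_cancel, mul_one] at hmem
          exact hg hmem
        exact hR (g * c) g hgc hg
    have hL : ∀ g h : G, g ∉ H → h ∉ H → g⁻¹ * h ∈ H := by
      intro g h hg hh
      have h1 := hR h g hh hg
      have h2 := hnorm (h * g⁻¹) g⁻¹ h1
      have e : g⁻¹ * (h * g⁻¹) * g⁻¹⁻¹ = g⁻¹ * h := by group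
      rwa [e] at h2
    obtain ⟨t, ht⟩ : ∃ t : G, t ∉ H := by
      by_contra h
      push_neg at h
      have : H = ⊤ := (Subgroup.eq_top_iff' H).mpr h
      rw [this, Subgroup.index_top] at hidx
      omega
    have key : ∀ z : G → A, conjSub (stab z) H → orbit z = orbit x₁ := by
      intro z hz
      obtain ⟨g, hg⟩ := hz
      have hsz : stab z = H := by
        ext c
        have h1 := hg (g⁻¹ * c * g)
        have e : g * (g⁻¹ * c * g) * g⁻¹ = c := by group
        rw [e] at h1
        constructor
        · intro hcs
          have h2 := h1.mpr hcs
          have h3 := hnorm _ g h2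
          rwa [e] at h3
        · intro hcH
          apply h1.mp
          have h2 := hnorm c g⁻¹ hcH
          rwa [inv_inv] at h2
      have hmemH : ∀ h, h ∈ H → z h = z 1 := by
        intro h hh
        have hs : h⁻¹ ∈ stab z := by rw [hsz]; exact H.inv_mem hh
        have h1 := congrFun ((mem_stab_iff z h⁻¹).mp hs) 1
        simp only [shift, one_mul, inv_inv] at h1
        exact h1
      have hmemC : ∀ h, h ∉ H → z h = z t := by
        intro h hh
        have hs : h⁻¹ * t ∈ stab z := by rw [hsz]; exact hL h t hh ht
        have h1 := congrFun ((mem_stab_iff z (h⁻¹ * t)).mp hs) t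
        simp only [shift] at h1
        have e : t * (h⁻¹ * t)⁻¹ = h := by group
        rwa [e] at h1
      have hne : z 1 ≠ z t := by
        intro he
        have hconst : ∀ h, z h = z 1 := by
          intro h
          by_cases hh : h ∈ H
          · exact hmemH h hh
          · rw [hmemC h hh, he]
        have hts : t ∈ stab z := by
          show shift z t = z
          funext h
          simp only [shift]
          exact (hconst _).trans (hconst h).symm
        rw [hsz] at hts
        exact ht hts
      rcases hall (z 1) with h1a | h1b
      · have htb : z t = b := by
          rcases hall (z t) with h | h
          · exact absurd (h1a.trans h.symm) hne
          · exact h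
        have hzx : z = x₁ := by
          funext h
          by_cases hh : h ∈ H
          · rw [hmemH h hh, h1a, hx₁def]
            simp [if_pos hh]
          · rw [hmemC h hh, htb, hx₁def]
            simp [if_neg hh]
        rw [hzx]
      · have hta : z t = a := by
          rcases hall (z t) with h | h
          · exact h
          · exact absurd (h1b.trans h.symm) hne
        have hzx : z = shift x₁ t := by
          funext h
          simp only [shift, hx₁def]
          by_cases hh : h ∈ H
          · have hnotin : h * t⁻¹ ∉ H := by
              intro hc
              have hmem := H.mul_mem (H.inv_mem hh) hc
              have e : h⁻¹ * (h * t⁻¹) = t⁻¹ := by group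
              rw [e] at hmem
              exact ht (by simpa using H.inv_mem hmem)
            rw [hmemH h hh, h1b, if_neg hnotin]
          · have hin : h * t⁻¹ ∈ H := hR h t hh ht
            rw [hmemC h hh, hta, if_pos hin]
        rw [hzx, orbit_shift']
    refine ⟨⟨?_⟩, ⟨⟨orbit x₁, x₁, rfl, hconj₁⟩⟩⟩
    rintro ⟨O₁, x, rfl, hx⟩ ⟨O₂, y, rfl, hy⟩
    exact Subtype.ext (show orbit x = orbit y by rw [key x hx, key y hy])
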